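/- Let α, β be reals with 1, α, β rationally independent, let N, q_k be positive integers with N = a·q_k + R, a ≥ 1, 1 ≤ R ≤ q_k, and suppose every gap of the point set E_{q_k,N} = {nα+mβ mod 1 : 0 ≤ n < q_k, 0 ≤ m < N} is strictly greater than a·‖q_kα‖. Then the gap set of E_N = {nα+mβ mod 1 : 0 ≤ n,m < N} consists of ‖q_kα‖ together with values of the form Δ − a‖q_kα‖ or Δ − (a−1)‖q_kα‖ where Δ ranges over gaps of E_{q_k,N}; in particular #Δ(E_N) ≤ 1 + 2·#Δ(E_{q_k,N}). -/

import Mathlib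

noncomputable section

/-- distance from `t` to the nearest integer -/
def nint (t : ℝ) : ℝ := |t - round t|

end

noncomputable section

/-- the set of points `nα + mβ mod 1` with `0 ≤ n < q`, `0 ≤ m < q'` -/
def Epts (α β : ℝ) (q q' : ℕ) : Set (AddCircle (1 : ℝ)) :=
  {x | ∃ n m : ℕ, n < q ∧ m < q' ∧ x = (((n : ℝ) * α + (m : ℝ) * β : ℝ) : AddCircle (1 : ℝ))}

/-- the (clockwise) distance from `x` to the next point of `E` -/
def gapOf (E : Set (AddCircle (1 : ℝ))) (x : AddCircle (1 : ℝ)) : ℝ :=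
  sInf {t : ℝ | 0 < t ∧ x + ((t : ℝ) : AddCircle (1 : ℝ)) ∈ E}

/-- the set of gap lengths between neighboring points of `E` -/
def gapSet (E : Set (AddCircle (1 : ℝ))) : Set ℝ := gapOf E '' E

end

noncomputable section

abbrev Circ := AddCircle (1 : ℝ)

instance : Fact ((0:ℝ) < 1) := ⟨one_pos⟩

def posRep (z : Circ) : ℝ := (AddCircle.equivIoc 1 0 z : ℝ)

lemma posRep_mem (z : Circ) : posRep z ∈ Set.Ioc (0:ℝ) 1 := by
  have := (AddCircle.equivIoc 1 0 z).2
  simpa [posRep] using this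

lemma coe_posRep (z : Circ) : ((posRep z : ℝ) : Circ) = z := by
  exact (AddCircle.equivIoc 1 0).symm_apply_apply z

lemma posRep_coe_le {t : ℝ} (ht : 0 < t) : posRep ((t : ℝ) : Circ) ≤ t := by
  set u := posRep ((t : ℝ) : Circ) with hu
  have h1 : ((u : ℝ) : Circ) = ((t : ℝ) : Circ) := coe_posRep _
  have h2 : (((u - t : ℝ)) : Circ) = 0 := by
    rw [AddCircle.coe_sub, h1]; simp
  rw [AddCircle.coe_eq_zero_iff] at h2
  obtain ⟨n, hn⟩ := h2
  have hmem := posRep_mem ((t : ℝ) : Circ)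
  have hn' : (n : ℝ) = u - t := by simpa using hn
  by_contra h
  push_neg at h
  have : (0:ℝ) < n := by rw [hn']; linarith
  have : (n:ℝ) ≤ 1 - t := by rw [hn']; have := hmem.2; linarith [hmem.2]
  have h0n : (0:ℤ) < n := by exact_mod_cast ‹(0:ℝ) < (n:ℝ)›
  have h1n : (1:ℝ) ≤ (n:ℝ) := by exact_mod_cast h0n
  linarith

lemma gapOf_isLeast {E : Set Circ} (hE : E.Finite) {x : Circ} (hx : x ∈ E) :
    IsLeast {t : ℝ | 0 < t ∧ x + ((t : ℝ) : Circ) ∈ E} (gapOf E x) := by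
  classical
  have hne : (hE.toFinset.image fun y => posRep (y - x)).Nonempty := by
    refine Finset.image_nonempty.2 ⟨x, hE.mem_toFinset.2 hx⟩
  set m := (hE.toFinset.image fun y => posRep (y - x)).min' hne with hm
  have hmem : m ∈ {t : ℝ | 0 < t ∧ x + ((t : ℝ) : Circ) ∈ E} := by
    obtain ⟨y₀, hy₀, he⟩ := Finset.mem_image.1 ((hE.toFinset.image fun y => posRep (y - x)).min'_mem hne)
    constructor
    · rw [hm, ← he]; exact (posRep_mem _).1
    · rw [hm, ← he]
      have : x + ((posRep (y₀ - x) : ℝ) : Circ) = y₀ := by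
        rw [coe_posRep]; abel
      rw [this]; exact hE.mem_toFinset.1 hy₀
  have hlb : ∀ t ∈ {t : ℝ | 0 < t ∧ x + ((t : ℝ) : Circ) ∈ E}, m ≤ t := by
    rintro t ⟨ht, hmemt⟩
    have h1 : posRep ((x + ((t:ℝ):Circ)) - x) = posRep ((t:ℝ):Circ) := by
      congr 1; abel
    have h2 : m ≤ posRep ((x + ((t:ℝ):Circ)) - x) :=
      Finset.min'_le _ _ (Finset.mem_image.2 ⟨_, hE.mem_toFinset.2 hmemt, rfl⟩)
    calc m ≤ posRep ((t:ℝ):Circ) := by rw [← h1]; exact h2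
      _ ≤ t := posRep_coe_le ht
  have : IsLeast {t : ℝ | 0 < t ∧ x + ((t : ℝ) : Circ) ∈ E} m := ⟨hmem, hlb⟩
  rwa [gapOf, this.csInf_eq]

lemma gapOf_pos {E : Set Circ} (hE : E.Finite) {x : Circ} (hx : x ∈ E) : 0 < gapOf E x :=
  (gapOf_isLeast hE hx).1.1

lemma gapOf_mem {E : Set Circ} (hE : E.Finite) {x : Circ} (hx : x ∈ E) :
    x + ((gapOf E x : ℝ) : Circ) ∈ E :=
  (gapOf_isLeast hE hx).1.2

lemma gapOf_le {E : Set Circ} (hE : E.Finite) {x : Circ} (hx : x ∈ E) {t : ℝ}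
    (ht : 0 < t) (hmem : x + ((t : ℝ) : Circ) ∈ E) : gapOf E x ≤ t :=
  (gapOf_isLeast hE hx).2 ⟨ht, hmem⟩

/-- key separation lemma -/
lemma gap_key {E : Set Circ} (hE : E.Finite) {z y : Circ} (hz : z ∈ E) (hy : y ∈ E)
    {t s : ℝ} (ht0 : 0 ≤ t) (ht1 : t < gapOf E z) (hs0 : 0 ≤ s) (hs1 : s < gapOf E y)
    (heq : z + ((t : ℝ) : Circ) = y + ((s : ℝ) : Circ)) : z = y ∧ t = s := by
  rcases lt_trichotomy t s with h | h | h
  · have hzy : y + (((s - t : ℝ)) : Circ) = z := by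
      have h2 : z = y + ((s:ℝ):Circ) - ((t:ℝ):Circ) := eq_sub_of_add_eq heq
      rw [AddCircle.coe_sub, h2]; abel
    have := gapOf_le hE hy (by linarith) (hzy ▸ hz)
    linarith
  · subst h
    refine ⟨?_, rfl⟩
    have := heq
    exact by
      have : z = y := by
        have h2 := heq
        exact add_right_cancel h2
      exact this
  · have hzy : z + (((t - s : ℝ)) : Circ) = y := by
      have h2 : y = z + ((t:ℝ):Circ) - ((s:ℝ):Circ) := eq_sub_of_add_eq heq.symm
      rw [AddCircle.coe_sub, h2]; abel
    have := gapOf_le hE hz (by linarith) (hzy ▸ hy)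
    linarith

lemma Epts_finite (α β : ℝ) (q q' : ℕ) : (Epts α β q q').Finite := by
  have : Epts α β q q' ⊆ (fun nm : ℕ × ℕ => (((nm.1 : ℝ) * α + (nm.2 : ℝ) * β : ℝ) : Circ)) ''
      (Set.Iio q ×ˢ Set.Iio q') := by
    rintro x ⟨n, m, hn, hm, rfl⟩
    exact ⟨(n, m), ⟨hn, hm⟩, rfl⟩
  exact Set.Finite.subset (((Set.finite_Iio q).prod (Set.finite_Iio q')).image _) this

lemma Epts_mono {α β : ℝ} {q q' r r' : ℕ} (h : q ≤ r) (h' : q' ≤ r') :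
    Epts α β q q' ⊆ Epts α β r r' := by
  rintro x ⟨n, m, hn, hm, rfl⟩
  exact ⟨n, m, hn.trans_le h, hm.trans_le h', rfl⟩

lemma int_coe_zero (c : ℤ) : (((c : ℝ)) : Circ) = 0 := by
  rw [AddCircle.coe_eq_zero_iff]
  exact ⟨c, by simp⟩

/-- decomposition of `Epts α β N N` into translated copies of `Epts α β qk N` -/
lemma mem_decomp {α β : ℝ} {N qk a R : ℕ} (hR1 : 1 ≤ R) (hR2 : R ≤ qk)
    (hN : N = a * qk + R) {x : Circ} :
    x ∈ Epts α β N N ↔ ∃ j : ℕ, ∃ y : Circ, j ≤ a ∧ y ∈ Epts α β qk N ∧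
      (j = a → y ∈ Epts α β R N) ∧
      x = y + ((((j : ℝ) * ((qk:ℝ)*α - round ((qk:ℝ)*α))) : ℝ) : Circ) := by
  have hqk : 0 < qk := hR1.trans hR2
  set p : ℤ := round ((qk:ℝ)*α) with hp
  have key : ∀ j r m : ℕ, ((((j*qk+r : ℕ) : ℝ) * α + (m:ℝ)*β : ℝ) : Circ)
      = (((r:ℝ)*α + (m:ℝ)*β : ℝ) : Circ) + ((((j : ℝ) * ((qk:ℝ)*α - p)) : ℝ) : Circ) := by
    intro j r m
    rw [← AddCircle.coe_add]
    have : ((j*qk+r : ℕ) : ℝ) * α + (m:ℝ)*β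
        = ((r:ℝ)*α + (m:ℝ)*β + (j : ℝ) * ((qk:ℝ)*α - p)) + ((j : ℕ) * p : ℤ) := by
      push_cast; ring
    rw [this, AddCircle.coe_add, int_coe_zero, add_zero]
  constructor
  · rintro ⟨n, m, hn, hm, rfl⟩
    have h1 : n / qk * qk + n % qk = n := Nat.div_add_mod' n qk
    have hmod : n % qk < qk := Nat.mod_lt _ hqk
    have hexp : (a+1) * qk = a*qk + qk := by ring
    have hlt : n / qk < a + 1 := (Nat.div_lt_iff_lt_mul hqk).2 (by omega)
    refine ⟨n / qk, ((((n % qk : ℕ):ℝ))*α + (m:ℝ)*β : ℝ), by omega, ?_, ?_, ?_⟩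
    · exact ⟨n % qk, m, hmod, hm, rfl⟩
    · intro hj
      refine ⟨n % qk, m, ?_, hm, rfl⟩
      rw [hj] at h1
      have hc : a*qk = qk*a := by ring
      omega
    · conv_lhs => rw [← h1]
      exact key _ _ _
  · rintro ⟨j, y, hj, hyE, hER, rfl⟩
    rcases eq_or_lt_of_le hj with h | h
    · obtain ⟨r, m, hr, hm, rfl⟩ := hER h
      refine ⟨j*qk + r, m, ?_, hm, (key j r m).symm⟩
      subst h
      have hc : j*qk = qk*j := by ring
      omega
    · obtain ⟨r, m, hr, hm, rfl⟩ := hyE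
      refine ⟨j*qk + r, m, ?_, hm, (key j r m).symm⟩
      have hexp : (j+1)*qk = j*qk + qk := by ring
      have hmono : (j+1)*qk ≤ a*qk := Nat.mul_le_mul_right qk (by omega)
      omega

lemma coe_shift (y : Circ) (u v : ℝ) :
    y + ((u : ℝ) : Circ) + ((v : ℝ) : Circ) = y + (((u + v : ℝ)) : Circ) := by
  rw [add_assoc, ← AddCircle.coe_add]

lemma main_pos (α β : ℝ) (N qk a R : ℕ) (ha : 1 ≤ a) (hR1 : 1 ≤ R) (hR2 : R ≤ qk)
    (hN : N = a * qk + R)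
    (hgap : ∀ d ∈ gapSet (Epts α β qk N), (a : ℝ) * nint ((qk : ℝ) * α) < d)
    (hθ : 0 < (qk:ℝ)*α - round ((qk:ℝ)*α)) :
    gapSet (Epts α β N N) ⊆
      ({nint ((qk : ℝ) * α)} : Set ℝ)
        ∪ ((fun d => d - (a : ℝ) * nint ((qk : ℝ) * α)) '' gapSet (Epts α β qk N))
        ∪ ((fun d => d - ((a : ℝ) - 1) * nint ((qk : ℝ) * α)) '' gapSet (Epts α β qk N)) := by
  classical
  set θ : ℝ := (qk:ℝ)*α - round ((qk:ℝ)*α) with hθdef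
  have hnint : nint ((qk:ℝ)*α) = θ := abs_of_pos hθ
  set E : Set Circ := Epts α β qk N with hEdef
  set E' : Set Circ := Epts α β N N with hE'def
  set ER : Set Circ := Epts α β R N with hERdef
  have hEfin : E.Finite := Epts_finite α β qk N
  have hE'fin : E'.Finite := Epts_finite α β N N
  have hqkN : qk ≤ N := by
    have h1 : 1*qk ≤ a*qk := Nat.mul_le_mul_right qk ha
    omega
  have hsub : E ⊆ E' := Epts_mono hqkN le_rfl
  have hgapθ : ∀ z ∈ E, (a:ℝ)*θ < gapOf E z := by
    intro z hz
    have := hgap _ ⟨z, hz, rfl⟩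
    rwa [hnint] at this
  rintro d ⟨x, hx, rfl⟩
  obtain ⟨j, y, hj, hyE, hjR, rfl⟩ := (mem_decomp hR1 hR2 hN).1 hx
  set Δ : ℝ := gapOf E y with hΔdef
  have haθΔ : (a:ℝ)*θ < Δ := hgapθ y hyE
  set k : ℕ := if y ∈ ER then a else a - 1 with hkdef
  have hk_le : k ≤ a := by rw [hkdef]; split <;> omega
  have hk_imp : k = a → y ∈ ER := by
    rw [hkdef]; split
    · intro _; assumption
    · intro h; omega
  have hjk : j ≤ k := by
    rw [hkdef]; split
    · exact hj
    · rcases eq_or_lt_of_le hj with h | h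
      · exact absurd (hjR h) (by assumption)
      · omega
  have hkθΔ : (k:ℝ)*θ < Δ := by
    have : (k:ℝ)*θ ≤ (a:ℝ)*θ :=
      mul_le_mul_of_nonneg_right (by exact_mod_cast hk_le) hθ.le
    linarith
  rcases eq_or_lt_of_le hjk with hcase | hcase
  · -- j = k : gap is Δ - k θ
    have hjc : ((j:ℕ):ℝ) = ((k:ℕ):ℝ) := by exact_mod_cast hcase
    have hjθΔ : (j:ℝ)*θ < Δ := by rw [hjc]; exact hkθΔ
    have hpos : 0 < Δ - (j:ℝ)*θ := by linarith
    have hmem : y + (((j:ℝ)*θ : ℝ) : Circ) + (((Δ - (j:ℝ)*θ : ℝ)) : Circ) ∈ E' := by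
      rw [coe_shift]
      have : (j:ℝ)*θ + (Δ - (j:ℝ)*θ) = Δ := by ring
      rw [this]
      exact hsub (gapOf_mem hEfin hyE)
    have hle : gapOf E' (y + (((j:ℝ)*θ : ℝ) : Circ)) ≤ Δ - (j:ℝ)*θ :=
      gapOf_le hE'fin hx hpos hmem
    have hge : ¬ gapOf E' (y + (((j:ℝ)*θ : ℝ) : Circ)) < Δ - (j:ℝ)*θ := by
      intro hlt
      set g := gapOf E' (y + (((j:ℝ)*θ : ℝ) : Circ)) with hgdef
      have hgpos : 0 < g := gapOf_pos hE'fin hx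
      have hw : y + (((j:ℝ)*θ : ℝ) : Circ) + ((g : ℝ) : Circ) ∈ E' := gapOf_mem hE'fin hx
      obtain ⟨i, z, hi, hzE, hiR, hwe⟩ := (mem_decomp hR1 hR2 hN).1 hw
      rw [coe_shift] at hwe
      have hkey := gap_key hEfin hzE hyE
        (by positivity : (0:ℝ) ≤ (i:ℝ)*θ)
        (by
          have h1 : (i:ℝ)*θ ≤ (a:ℝ)*θ :=
            mul_le_mul_of_nonneg_right (by exact_mod_cast hi) hθ.le
          linarith [hgapθ z hzE])
        (by positivity)
        (by
          show (j:ℝ)*θ + g < gapOf E y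
          rw [← hΔdef]; linarith)
        hwe.symm
      obtain ⟨hzy, heq⟩ := hkey
      have h4 : 0 < ((i:ℝ) - j) * θ := by
        have : ((i:ℝ) - j)*θ = g := by rw [sub_mul]; linarith
        linarith
      have hij : (j:ℝ) < i := by
        rcases mul_pos_iff.1 h4 with ⟨h5, _⟩ | ⟨_, h5⟩
        · linarith
        · linarith
      have hijn : j < i := by exact_mod_cast hij
      by_cases hyR : y ∈ ER
      · have : j = a := by rw [hcase, hkdef, if_pos hyR]
        omega
      · have hja : j = a - 1 := by rw [hcase, hkdef, if_neg hyR]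
        have hia : i = a := by omega
        exact hyR (hzy ▸ hiR hia)
    have hg : gapOf E' (y + (((j:ℝ)*θ : ℝ) : Circ)) = Δ - (j:ℝ)*θ := by
      rcases lt_or_eq_of_le hle with h | h
      · exact absurd h hge
      · exact h
    have hΔmem : Δ ∈ gapSet E := ⟨y, hyE, hΔdef.symm⟩
    by_cases hyR : y ∈ ER
    · have hja : j = a := by rw [hcase, hkdef, if_pos hyR]
      have hjca : ((j:ℕ):ℝ) = (a:ℝ) := by exact_mod_cast hja
      left; right
      have hfin : Δ - (a:ℝ) * nint ((qk:ℝ)*α) = gapOf E' (y + ((((j:ℝ)*θ) : ℝ) : Circ)) := by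
        rw [hnint, hg, hjca]
      exact ⟨Δ, hΔmem, hfin⟩
    · have hja : j = a - 1 := by rw [hcase, hkdef, if_neg hyR]
      right
      have hjca : ((j:ℕ):ℝ) = (a:ℝ) - 1 := by
        rw [hja]
        push_cast [Nat.cast_sub ha]
        ring
      have hfin : Δ - ((a:ℝ) - 1) * nint ((qk:ℝ)*α) = gapOf E' (y + ((((j:ℝ)*θ) : ℝ) : Circ)) := by
        rw [hnint, hg, hjca]
      exact ⟨Δ, hΔmem, hfin⟩
  · -- j < k : gap is θ
    have hmem : y + (((j:ℝ)*θ : ℝ) : Circ) + ((θ : ℝ) : Circ) ∈ E' := by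
      rw [coe_shift]
      refine (mem_decomp hR1 hR2 hN).2 ⟨j+1, y, by omega, hyE, ?_, ?_⟩
      · intro h
        exact hk_imp (by omega)
      · congr 1
        rw [hθdef]; push_cast; ring_nf
    have hle : gapOf E' (y + (((j:ℝ)*θ : ℝ) : Circ)) ≤ θ :=
      gapOf_le hE'fin hx hθ hmem
    have hge : ¬ gapOf E' (y + (((j:ℝ)*θ : ℝ) : Circ)) < θ := by
      intro hlt
      set g := gapOf E' (y + (((j:ℝ)*θ : ℝ) : Circ)) with hgdef
      have hgpos : 0 < g := gapOf_pos hE'fin hx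
      have hw : y + (((j:ℝ)*θ : ℝ) : Circ) + ((g : ℝ) : Circ) ∈ E' := gapOf_mem hE'fin hx
      obtain ⟨i, z, hi, hzE, hiR, hwe⟩ := (mem_decomp hR1 hR2 hN).1 hw
      rw [coe_shift] at hwe
      have hj1k : (j:ℝ) + 1 ≤ k := by exact_mod_cast hcase
      have hkey := gap_key hEfin hzE hyE
        (by positivity : (0:ℝ) ≤ (i:ℝ)*θ)
        (by
          have h1 : (i:ℝ)*θ ≤ (a:ℝ)*θ :=
            mul_le_mul_of_nonneg_right (by exact_mod_cast hi) hθ.le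
          linarith [hgapθ z hzE])
        (by positivity)
        (by
          show (j:ℝ)*θ + g < gapOf E y
          rw [← hΔdef]
          have hkA : (k:ℝ) ≤ a := by exact_mod_cast hk_le
          have h6 : ((j:ℝ)+1)*θ ≤ (a:ℝ)*θ :=
            mul_le_mul_of_nonneg_right (by linarith) hθ.le
          have h7 : ((j:ℝ)+1)*θ = (j:ℝ)*θ + θ := by ring
          linarith)
        hwe.symm
      obtain ⟨hzy, heq⟩ := hkey
      have h4 : 0 < ((i:ℝ) - j) * θ := by
        have : ((i:ℝ) - j)*θ = g := by rw [sub_mul]; linarith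
        linarith
      have hij : (j:ℝ) < i := by
        rcases mul_pos_iff.1 h4 with ⟨h5, _⟩ | ⟨_, h5⟩
        · linarith
        · linarith
      have hijn : j < i := by exact_mod_cast hij
      have h5 : (j:ℝ) + 1 ≤ (i:ℝ) := by exact_mod_cast hijn
      have h6 : ((i:ℝ) - j)*θ = g := by rw [sub_mul]; linarith
      have h7 : 1*θ ≤ ((i:ℝ) - j)*θ := mul_le_mul_of_nonneg_right (by linarith) hθ.le
      rw [one_mul] at h7
      linarith
    have hg : gapOf E' (y + (((j:ℝ)*θ : ℝ) : Circ)) = θ := by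
      rcases lt_or_eq_of_le hle with h | h
      · exact absurd h hge
      · exact h
    left; left
    have hfin : gapOf E' (y + ((((j:ℝ)*θ) : ℝ) : Circ)) = nint ((qk:ℝ)*α) := by
      rw [hg, hnint]
    exact hfin

lemma Epts_neg (α β : ℝ) (q q' : ℕ) : Epts (-α) (-β) q q' = -(Epts α β q q') := by
  ext x
  have key : ∀ n m : ℕ, (((n:ℝ) * (-α) + (m:ℝ) * (-β) : ℝ) : Circ)
      = -(((n:ℝ) * α + (m:ℝ) * β : ℝ) : Circ) := by
    intro n m
    rw [show (n:ℝ) * (-α) + (m:ℝ) * (-β) = -((n:ℝ) * α + (m:ℝ) * β) by ring]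
    exact AddCircle.coe_neg _
  constructor
  · rintro ⟨n, m, hn, hm, rfl⟩
    rw [Set.mem_neg, key, neg_neg]
    exact ⟨n, m, hn, hm, rfl⟩
  · intro hx
    obtain ⟨n, m, hn, hm, he⟩ := Set.mem_neg.1 hx
    refine ⟨n, m, hn, hm, ?_⟩
    rw [key, ← he, neg_neg]

lemma nint_neg (t : ℝ) : nint (-t) = nint t := by
  unfold nint
  rw [abs_sub_round_eq_min, abs_sub_round_eq_min]
  by_cases h : Int.fract t = 0
  · rw [h, Int.fract_neg_eq_zero.2 h]
  · rw [Int.fract_neg h]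
    rw [show (1:ℝ) - (1 - Int.fract t) = Int.fract t by ring, min_comm]

lemma succ_inj {E : Set Circ} (hE : E.Finite) {y y' : Circ} (hy : y ∈ E) (hy' : y' ∈ E)
    (h : y + ((gapOf E y : ℝ) : Circ) = y' + ((gapOf E y' : ℝ) : Circ)) : y = y' := by
  have hgy := gapOf_pos hE hy
  have hgy' := gapOf_pos hE hy'
  rcases lt_trichotomy (gapOf E y) (gapOf E y') with hlt | heq | hlt
  · exfalso
    have h2 : y = y' + ((gapOf E y' : ℝ) : Circ) - ((gapOf E y : ℝ) : Circ) :=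
      eq_sub_of_add_eq h
    have h3 : y' + (((gapOf E y' - gapOf E y : ℝ)) : Circ) = y := by
      rw [AddCircle.coe_sub]
      conv_rhs => rw [h2]
      abel
    have := gapOf_le hE hy' (by linarith) (h3 ▸ hy)
    linarith
  · rw [heq] at h
    exact add_right_cancel h
  · exfalso
    have h2 : y' = y + ((gapOf E y : ℝ) : Circ) - ((gapOf E y' : ℝ) : Circ) :=
      eq_sub_of_add_eq h.symm
    have h3 : y + (((gapOf E y - gapOf E y' : ℝ)) : Circ) = y' := by
      rw [AddCircle.coe_sub]
      conv_rhs => rw [h2]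
      abel
    have := gapOf_le hE hy (by linarith) (h3 ▸ hy')
    linarith

lemma succ_surj {E : Set Circ} (hE : E.Finite) {v : Circ} (hv : v ∈ E) :
    ∃ y ∈ E, y + ((gapOf E y : ℝ) : Circ) = v := by
  classical
  have := Set.surj_on_of_inj_on_of_ncard_le (s := E) (t := E)
    (fun y _ => y + ((gapOf E y : ℝ) : Circ))
    (fun y hy => gapOf_mem hE hy)
    (fun y₁ y₂ h₁ h₂ he => succ_inj hE h₁ h₂ he)
    le_rfl hE
  obtain ⟨y, hy, he⟩ := this v hv
  exact ⟨y, hy, he.symm⟩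

lemma gapOf_neg_succ {E : Set Circ} (hE : E.Finite) {y : Circ} (hy : y ∈ E) :
    gapOf (-E) (-(y + ((gapOf E y : ℝ) : Circ))) = gapOf E y := by
  set g := gapOf E y with hgdef
  have hgpos : 0 < g := gapOf_pos hE hy
  have hIsLeast : IsLeast {t : ℝ | 0 < t ∧ -(y + ((g : ℝ) : Circ)) + ((t : ℝ) : Circ) ∈ -E} g := by
    constructor
    · refine ⟨hgpos, ?_⟩
      rw [Set.mem_neg]
      have : -(-(y + ((g : ℝ) : Circ)) + ((g : ℝ) : Circ)) = y := by abel
      rw [this]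
      exact hy
    · rintro t ⟨ht, hmem⟩
      by_contra hlt
      push_neg at hlt
      rw [Set.mem_neg] at hmem
      have h1 : -(-(y + ((g : ℝ) : Circ)) + ((t : ℝ) : Circ)) = y + (((g - t : ℝ)) : Circ) := by
        rw [AddCircle.coe_sub]; abel
      rw [h1] at hmem
      have := gapOf_le hE hy (by linarith) hmem
      linarith
  rw [gapOf, hIsLeast.csInf_eq]

lemma gapSet_neg {E : Set Circ} (hE : E.Finite) : gapSet (-E) = gapSet E := by
  ext d
  constructor
  · rintro ⟨w, hw, rfl⟩
    obtain ⟨y, hy, he⟩ := succ_surj hE (Set.mem_neg.1 hw)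
    have hwe : w = -(y + ((gapOf E y : ℝ) : Circ)) := by rw [he, neg_neg]
    rw [hwe, gapOf_neg_succ hE hy]
    exact ⟨y, hy, rfl⟩
  · rintro ⟨y, hy, rfl⟩
    refine ⟨-(y + ((gapOf E y : ℝ) : Circ)), ?_, gapOf_neg_succ hE hy⟩
    rw [Set.mem_neg, neg_neg]
    exact gapOf_mem hE hy

end

theorem exduction_gap_bound (α β : ℝ)
    (hind : ∀ n₀ n₁ n₂ : ℤ, (n₀ : ℝ) + n₁ * α + n₂ * β = 0 → n₀ = 0 ∧ n₁ = 0 ∧ n₂ = 0)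
    (N qk a R : ℕ) (ha : 1 ≤ a) (hR1 : 1 ≤ R) (hR2 : R ≤ qk) (hN : N = a * qk + R)
    (hgap : ∀ d ∈ gapSet (Epts α β qk N), (a : ℝ) * nint ((qk : ℝ) * α) < d) :
    gapSet (Epts α β N N) ⊆
      ({nint ((qk : ℝ) * α)} : Set ℝ)
        ∪ ((fun d => d - (a : ℝ) * nint ((qk : ℝ) * α)) '' gapSet (Epts α β qk N))
        ∪ ((fun d => d - ((a : ℝ) - 1) * nint ((qk : ℝ) * α)) '' gapSet (Epts α β qk N)) ∧
    (gapSet (Epts α β N N)).ncard ≤ 1 + 2 * (gapSet (Epts α β qk N)).ncard := by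
  have hqk : 0 < qk := hR1.trans hR2
  set θ : ℝ := (qk:ℝ)*α - round ((qk:ℝ)*α) with hθdef
  -- 2 * (qk α) is never an integer
  have hhalf : ∀ r : ℤ, 2*((qk:ℝ)*α) ≠ (r:ℝ) := by
    intro r hr
    have h0 : ((-r : ℤ) : ℝ) + ((2*qk : ℤ) : ℝ) * α + ((0:ℤ):ℝ) * β = 0 := by
      push_cast
      linarith
    have := (hind (-r) (2*qk) 0 h0).2.1
    omega
  have hθne : θ ≠ 0 := by
    intro h
    have h0 : ((-(round ((qk:ℝ)*α)) : ℤ) : ℝ) + ((qk : ℤ) : ℝ) * α + ((0:ℤ):ℝ) * β = 0 := by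
      push_cast
      rw [hθdef] at h
      linarith
    have := (hind _ qk 0 h0).2.1
    omega
  have hsubset : gapSet (Epts α β N N) ⊆
      ({nint ((qk : ℝ) * α)} : Set ℝ)
        ∪ ((fun d => d - (a : ℝ) * nint ((qk : ℝ) * α)) '' gapSet (Epts α β qk N))
        ∪ ((fun d => d - ((a : ℝ) - 1) * nint ((qk : ℝ) * α)) '' gapSet (Epts α β qk N)) := by
    rcases lt_or_gt_of_ne hθne with hneg | hpos
    · -- θ < 0 : use the reflected configuration
      have hnn : (qk:ℝ) * (-α) = -((qk:ℝ)*α) := by ring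
      have hnint' : nint ((qk:ℝ) * (-α)) = nint ((qk:ℝ)*α) := by rw [hnn, nint_neg]
      have hgs1 : gapSet (Epts (-α) (-β) qk N) = gapSet (Epts α β qk N) := by
        rw [Epts_neg, gapSet_neg (Epts_finite α β qk N)]
      have hgs2 : gapSet (Epts (-α) (-β) N N) = gapSet (Epts α β N N) := by
        rw [Epts_neg, gapSet_neg (Epts_finite α β N N)]
      -- positivity of the reflected θ
      have hround : ∀ x : ℝ, (round x : ℝ) ≤ x + 1/2 ∧ x - 1/2 < round x := by
        intro x
        rw [round_eq]
        constructor
        · have := Int.floor_le (x + 1/2)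
          linarith
        · have := Int.lt_floor_add_one (x + 1/2)
          linarith
      have hb1 := hround ((qk:ℝ)*α)
      have hb2 := hround ((qk:ℝ)*(-α))
      have hθhalf : θ ≠ -(1/2) := by
        intro h
        refine hhalf (2 * round ((qk:ℝ)*α) - 1) ?_
        rw [hθdef] at h
        push_cast
        linarith
      have hθ'half : (qk:ℝ)*(-α) - round ((qk:ℝ)*(-α)) ≠ -(1/2) := by
        intro h
        refine hhalf (1 - 2 * round ((qk:ℝ)*(-α))) ?_
        push_cast
        nlinarith [h]
      have hθ' : 0 < (qk:ℝ)*(-α) - round ((qk:ℝ)*(-α)) := by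
        set θ' : ℝ := (qk:ℝ)*(-α) - round ((qk:ℝ)*(-α)) with hθ'def
        have hsum : θ + θ' = -(((round ((qk:ℝ)*α) + round ((qk:ℝ)*(-α))) : ℤ) : ℝ) := by
          rw [hθdef, hθ'def]
          push_cast
          ring
        set c : ℤ := round ((qk:ℝ)*α) + round ((qk:ℝ)*(-α)) with hcdef
        have hθlow : -(1/2 : ℝ) < θ := by
          rcases lt_or_eq_of_le (by rw [hθdef]; linarith [hb1.1] : -(1/2:ℝ) ≤ θ) with h | h
          · exact h
          · exact absurd h.symm hθhalf
        have hθ'low : -(1/2 : ℝ) < θ' := by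
          rcases lt_or_eq_of_le (by rw [hθ'def]; linarith [hb2.1] : -(1/2:ℝ) ≤ θ') with h | h
          · exact h
          · exact absurd h.symm hθ'half
        have hθhigh : θ < 1/2 := by rw [hθdef]; linarith [hb1.2]
        have hθ'high : θ' < 1/2 := by rw [hθ'def]; linarith [hb2.2]
        have hc1 : ((-1 : ℤ) : ℝ) < -(c:ℝ) := by rw [← hsum]; push_cast; linarith
        have hc2 : (-(c:ℝ)) < ((1:ℤ):ℝ) := by rw [← hsum]; push_cast; linarith
        have hc0 : c = 0 := by
          have h1 : (-1 : ℤ) < -c := by exact_mod_cast hc1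
          have h2 : (-c : ℤ) < 1 := by exact_mod_cast hc2
          omega
        have : θ + θ' = 0 := by rw [hsum, hc0]; norm_num
        linarith
      have hind' : ∀ n₀ n₁ n₂ : ℤ, (n₀ : ℝ) + n₁ * (-α) + n₂ * (-β) = 0 →
          n₀ = 0 ∧ n₁ = 0 ∧ n₂ = 0 := by
        intro n₀ n₁ n₂ h
        have h2 : ((n₀:ℤ):ℝ) + ((-n₁ : ℤ):ℝ) * α + ((-n₂ : ℤ):ℝ) * β = 0 := by
          push_cast
          push_cast at h
          linarith
        obtain ⟨e1, e2, e3⟩ := hind n₀ (-n₁) (-n₂) h2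
        exact ⟨e1, by omega, by omega⟩
      have hgap' : ∀ d ∈ gapSet (Epts (-α) (-β) qk N),
          (a : ℝ) * nint ((qk : ℝ) * (-α)) < d := by
        intro d hd
        rw [hgs1] at hd
        rw [hnint']
        exact hgap d hd
      have := main_pos (-α) (-β) N qk a R ha hR1 hR2 hN hgap' hθ'
      rw [hgs1, hgs2, hnint'] at this
      exact this
    · exact main_pos α β N qk a R ha hR1 hR2 hN hgap hpos
  refine ⟨hsubset, ?_⟩
  have hfin : (gapSet (Epts α β qk N)).Finite := (Epts_finite α β qk N).image _
  have hfin1 : (((fun d => d - (a : ℝ) * nint ((qk : ℝ) * α)) '' gapSet (Epts α β qk N))).Finite :=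
    hfin.image _
  have hfin2 : (((fun d => d - ((a : ℝ) - 1) * nint ((qk : ℝ) * α)) '' gapSet (Epts α β qk N))).Finite :=
    hfin.image _
  have hUfin : (({nint ((qk : ℝ) * α)} : Set ℝ)
        ∪ ((fun d => d - (a : ℝ) * nint ((qk : ℝ) * α)) '' gapSet (Epts α β qk N))
        ∪ ((fun d => d - ((a : ℝ) - 1) * nint ((qk : ℝ) * α)) '' gapSet (Epts α β qk N))).Finite :=
    ((Set.finite_singleton _).union hfin1).union hfin2
  have h1 := Set.ncard_le_ncard hsubset hUfin
  have h2 := Set.ncard_union_le (({nint ((qk : ℝ) * α)} : Set ℝ)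
        ∪ ((fun d => d - (a : ℝ) * nint ((qk : ℝ) * α)) '' gapSet (Epts α β qk N)))
        ((fun d => d - ((a : ℝ) - 1) * nint ((qk : ℝ) * α)) '' gapSet (Epts α β qk N))
  have h3 := Set.ncard_union_le ({nint ((qk : ℝ) * α)} : Set ℝ)
        ((fun d => d - (a : ℝ) * nint ((qk : ℝ) * α)) '' gapSet (Epts α β qk N))
  have h4 : (((fun d => d - (a : ℝ) * nint ((qk : ℝ) * α)) '' gapSet (Epts α β qk N))).ncard
      ≤ (gapSet (Epts α β qk N)).ncard := Set.ncard_image_le hfin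
  have h5 : (((fun d => d - ((a : ℝ) - 1) * nint ((qk : ℝ) * α)) '' gapSet (Epts α β qk N))).ncard
      ≤ (gapSet (Epts α β qk N)).ncard := Set.ncard_image_le hfin
  have h6 : (({nint ((qk : ℝ) * α)} : Set ℝ)).ncard = 1 := Set.ncard_singleton _
  omega
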